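/- Let k ≥ d ≥ 0 and t ≥ d with t + k − d ≤ T. Suppose the controller, given predictions ŵ_{s|t} ∈ ℝ^n for s = t−d,…,t+k−d−1, forms the estimate x̂ of the current state by x̂_{t−d} = x_{t−d} and x̂_{s+1} = A x̂_s + B u_s + ŵ_{s|t} for s = t−d,…,t−1 (where x and u are the actual states and controls of the system), and applies u_t = −(R + BᵀPB)⁻¹ Bᵀ (P A x̂_t + Σ_{i=0}^{k−d−1} (Fᵀ)^i P ŵ_{t+i|t}). Then u_t = −(R + BᵀPB)⁻¹ Bᵀ (P A x_t + Σ_{i=0}^{T−t−1} (Fᵀ)^i P w_{t+i} − η_t) with η_t = Σ_{i=1}^{d} P A^i e_{t−i|t} + Σ_{i=0}^{k−d−1} (Fᵀ)^i P e_{t+i|t} + Σ_{i=k−d}^{T−t−1} (Fᵀ)^i P w_{t+i}, where e_{s|t} = w_s − ŵ_{s|t}. -/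
import Mathlib


open Matrix

noncomputable def evNorm {n : ℕ} (x : Fin n → ℝ) : ℝ := Real.sqrt (∑ i, x i ^ 2)

noncomputable def specNorm {n m : ℕ} (M : Matrix (Fin n) (Fin m) ℝ) : ℝ :=
  sSup {c : ℝ | ∃ x : Fin m → ℝ, evNorm x ≤ 1 ∧ c = evNorm (M *ᵥ x)}

noncomputable def lambdaMin {n : ℕ} (M : Matrix (Fin n) (Fin n) ℝ) : ℝ :=
  sInf {c : ℝ | ∃ x : Fin n → ℝ, evNorm x = 1 ∧ c = x ⬝ᵥ (M *ᵥ x)}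

noncomputable def specRad {n : ℕ} (M : Matrix (Fin n) (Fin n) ℝ) : ENNReal :=
  spectralRadius ℂ (M.map Complex.ofReal)

noncomputable def seqState {n m : ℕ} (A : Matrix (Fin n) (Fin n) ℝ)
    (B : Matrix (Fin n) (Fin m) ℝ) (x0 : Fin n → ℝ)
    (u : ℕ → Fin m → ℝ) (w : ℕ → Fin n → ℝ) : ℕ → Fin n → ℝ
  | 0 => x0
  | t + 1 => A *ᵥ seqState A B x0 u w t + B *ᵥ u t + w t

noncomputable def trajCost {n m : ℕ} (A : Matrix (Fin n) (Fin n) ℝ)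
    (B : Matrix (Fin n) (Fin m) ℝ) (Q : Matrix (Fin n) (Fin n) ℝ)
    (R : Matrix (Fin m) (Fin m) ℝ) (Qf : Matrix (Fin n) (Fin n) ℝ)
    (x0 : Fin n → ℝ) (w : ℕ → Fin n → ℝ) (T : ℕ) (u : ℕ → Fin m → ℝ) : ℝ :=
  (∑ t ∈ Finset.range T,
      (seqState A B x0 u w t ⬝ᵥ (Q *ᵥ seqState A B x0 u w t) + u t ⬝ᵥ (R *ᵥ u t)))
    + seqState A B x0 u w T ⬝ᵥ (Qf *ᵥ seqState A B x0 u w T)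

noncomputable def mpcCost {n m : ℕ} (A : Matrix (Fin n) (Fin n) ℝ)
    (B : Matrix (Fin n) (Fin m) ℝ) (Q : Matrix (Fin n) (Fin n) ℝ)
    (R : Matrix (Fin m) (Fin m) ℝ) (P : Matrix (Fin n) (Fin n) ℝ)
    (z : Fin n → ℝ) (what : ℕ → Fin n → ℝ) (k : ℕ) (u : Fin k → Fin m → ℝ) : ℝ :=
  trajCost A B Q R P z what k (fun t => if h : t < k then u ⟨t, h⟩ else 0)

private lemma mulVec_sum' {n p : ℕ} (M : Matrix (Fin n) (Fin p) ℝ) (s : Finset ℕ)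
    (v : ℕ → Fin p → ℝ) : M *ᵥ (∑ i ∈ s, v i) = ∑ i ∈ s, M *ᵥ v i := by
  ext j
  simp [Matrix.mulVec, dotProduct, Finset.mul_sum]
  rw [Finset.sum_comm]

private lemma icc_sum' {α : Type*} [AddCommMonoid α] (f : ℕ → α) (d : ℕ) :
    ∑ i ∈ Finset.Icc 1 d, f i = ∑ i ∈ Finset.range d, f (1 + i) := by
  rw [← Finset.Ico_add_one_right_eq_Icc, Finset.sum_Ico_eq_sum_range]; simp

theorem stmt6 (n m T d k t : ℕ) (hdk : d ≤ k) (htd : d ≤ t) (htT : t + k - d ≤ T)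
    (A : Matrix (Fin n) (Fin n) ℝ) (B : Matrix (Fin n) (Fin m) ℝ)
    (Q : Matrix (Fin n) (Fin n) ℝ) (R : Matrix (Fin m) (Fin m) ℝ)
    (P : Matrix (Fin n) (Fin n) ℝ)
    (hQ : Q.PosSemidef) (hR : R.PosDef) (hP : P.PosDef)
    (hDARE : P = Q + Aᵀ * P * A - Aᵀ * P * B * (R + Bᵀ * P * B)⁻¹ * (Bᵀ * P * A))
    (F : Matrix (Fin n) (Fin n) ℝ)
    (hF : F = A - B * ((R + Bᵀ * P * B)⁻¹ * (Bᵀ * P * A)))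
    (x : ℕ → Fin n → ℝ) (u : ℕ → Fin m → ℝ) (w what : ℕ → Fin n → ℝ)
    (xhat : ℕ → Fin n → ℝ)
    (hx : ∀ s, x (s + 1) = A *ᵥ x s + B *ᵥ u s + w s)
    (hinit : xhat (t - d) = x (t - d))
    (hhat : ∀ s, t - d ≤ s → s < t → xhat (s + 1) = A *ᵥ xhat s + B *ᵥ u s + what s)
    (hu : u t = -((((R + Bᵀ * P * B)⁻¹ * Bᵀ) *ᵥ
        (P *ᵥ (A *ᵥ xhat t) + ∑ i ∈ Finset.range (k - d), ((Fᵀ) ^ i * P) *ᵥ what (t + i))))) :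
    u t = -((((R + Bᵀ * P * B)⁻¹ * Bᵀ) *ᵥ
      (P *ᵥ (A *ᵥ x t) + (∑ i ∈ Finset.range (T - t), ((Fᵀ) ^ i * P) *ᵥ w (t + i))
        - (∑ i ∈ Finset.Icc 1 d, (P * A ^ i) *ᵥ (w (t - i) - what (t - i))
          + ∑ i ∈ Finset.range (k - d), ((Fᵀ) ^ i * P) *ᵥ (w (t + i) - what (t + i))
          + ∑ i ∈ Finset.Ico (k - d) (T - t), ((Fᵀ) ^ i * P) *ᵥ w (t + i))))) := by
  have hkd : k - d ≤ T - t := by omega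
  -- Estimation error accumulation
  have key : ∀ j, j ≤ d → xhat (t - d + j) = x (t - d + j)
      + ∑ i ∈ Finset.range j,
          (A ^ (j - 1 - i)) *ᵥ (what (t - d + i) - w (t - d + i)) := by
    intro j
    induction j with
    | zero => intro _; simp [hinit]
    | succ j ih =>
      intro hj
      have hstep : t - d + (j + 1) = (t - d + j) + 1 := by omega
      rw [hstep, hhat (t - d + j) (Nat.le_add_right _ _) (by omega), hx (t - d + j),
        ih (by omega), Finset.sum_range_succ]
      have hl : (A ^ (j + 1 - 1 - j)) *ᵥ (what (t - d + j) - w (t - d + j))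
          = what (t - d + j) - w (t - d + j) := by
        have : j + 1 - 1 - j = 0 := by omega
        rw [this, pow_zero, Matrix.one_mulVec]
      have hre : ∑ i ∈ Finset.range j,
            (A ^ (j + 1 - 1 - i)) *ᵥ (what (t - d + i) - w (t - d + i))
          = ∑ i ∈ Finset.range j,
            A *ᵥ ((A ^ (j - 1 - i)) *ᵥ (what (t - d + i) - w (t - d + i))) := by
        refine Finset.sum_congr rfl fun i hi => ?_
        have hi' : i < j := Finset.mem_range.mp hi
        have h1 : j + 1 - 1 - i = (j - 1 - i) + 1 := by omega
        rw [h1, Matrix.mulVec_mulVec, pow_succ']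
      rw [hre, hl, ← mulVec_sum', Matrix.mulVec_add]
      abel
  have hxt : xhat t = x t + ∑ i ∈ Finset.range d,
      (A ^ (d - 1 - i)) *ᵥ (what (t - d + i) - w (t - d + i)) := by
    have := key d le_rfl
    rwa [Nat.sub_add_cancel htd] at this
  -- Rewrite the Icc sum
  have hE1 : (∑ i ∈ Finset.Icc 1 d, (P * A ^ i) *ᵥ (w (t - i) - what (t - i)))
      = ∑ i ∈ Finset.range d, (P * A ^ (d - i)) *ᵥ (w (t - d + i) - what (t - d + i)) := by
    rw [icc_sum', ← Finset.sum_range_reflect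
      (fun i => (P * A ^ (d - i)) *ᵥ (w (t - d + i) - what (t - d + i))) d]
    refine Finset.sum_congr rfl fun i hi => ?_
    have hi' : i < d := Finset.mem_range.mp hi
    have h1 : d - (d - 1 - i) = 1 + i := by omega
    have h2 : t - d + (d - 1 - i) = t - (1 + i) := by omega
    rw [h1, h2]
  -- state estimate expansion
  have hAx : P *ᵥ (A *ᵥ xhat t) = P *ᵥ (A *ᵥ x t)
      + ∑ i ∈ Finset.range d, (P * A ^ (d - i)) *ᵥ (what (t - d + i) - w (t - d + i)) := by
    rw [hxt, Matrix.mulVec_add, Matrix.mulVec_add, mulVec_sum', mulVec_sum']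
    congr 1
    refine Finset.sum_congr rfl fun i hi => ?_
    have hi' : i < d := Finset.mem_range.mp hi
    have h1 : d - i = (d - 1 - i) + 1 := by omega
    rw [Matrix.mulVec_mulVec, Matrix.mulVec_mulVec, h1, pow_succ', ← mul_assoc]
  -- final vector identity
  have hV : P *ᵥ (A *ᵥ xhat t) + ∑ i ∈ Finset.range (k - d), ((Fᵀ) ^ i * P) *ᵥ what (t + i)
      = P *ᵥ (A *ᵥ x t) + (∑ i ∈ Finset.range (T - t), ((Fᵀ) ^ i * P) *ᵥ w (t + i))
        - (∑ i ∈ Finset.Icc 1 d, (P * A ^ i) *ᵥ (w (t - i) - what (t - i))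
          + ∑ i ∈ Finset.range (k - d), ((Fᵀ) ^ i * P) *ᵥ (w (t + i) - what (t + i))
          + ∑ i ∈ Finset.Ico (k - d) (T - t), ((Fᵀ) ^ i * P) *ᵥ w (t + i)) := by
    rw [hAx, hE1,
      ← Finset.sum_range_add_sum_Ico (fun i => ((Fᵀ) ^ i * P) *ᵥ w (t + i)) hkd]
    simp only [Matrix.mulVec_sub, Finset.sum_sub_distrib]
    abel
  rw [hu, hV]
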